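/- There exist absolute constants c, c' > 0 such that: for every ellipsoid E in ℝ^n and every natural number m ≤ c√n, there exists a subset σ of {1,…,n} with |σ| = m such that E ∩ ℝ^σ ⊇ [c'/(√m · M_E)] · D_σ. -/

import Mathlib

open MeasureTheory Metric Set
open scoped Pointwise ENNReal

set_option maxHeartbeats 1000000
noncomputable section

/-- The coordinate subspace `ℝ^σ` of `ℝ^n` (w.r.t. the standard orthonormal basis). -/
def coordSubspace {n : ℕ} (σ : Finset (Fin n)) : Set (EuclideanSpace ℝ (Fin n)) :=
  {x | ∀ j ∉ σ, x j = 0}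

/-- Orthogonal projection `P_σ` onto the coordinate subspace `ℝ^σ`. -/
def coordProj {n : ℕ} (σ : Finset (Fin n)) (x : EuclideanSpace ℝ (Fin n)) :
    EuclideanSpace ℝ (Fin n) := WithLp.toLp 2 (fun i => if i ∈ σ then x i else 0)

/-- `D_σ = D_n ∩ ℝ^σ`, the unit ball of the coordinate subspace `ℝ^σ`. -/
def coordBall {n : ℕ} (σ : Finset (Fin n)) : Set (EuclideanSpace ℝ (Fin n)) :=
  closedBall 0 1 ∩ coordSubspace σ

/-- An ellipsoid in `ℝ^n`: the image of the Euclidean unit ball under an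
invertible linear map. -/
def IsEllipsoid {n : ℕ} (E : Set (EuclideanSpace ℝ (Fin n))) : Prop :=
  ∃ T : EuclideanSpace ℝ (Fin n) ≃ₗ[ℝ] EuclideanSpace ℝ (Fin n),
    E = T '' closedBall 0 1

/-- `M_K = (∫_{S^{n-1}} ‖x‖_K^2 dσ(x))^{1/2}`, where `σ` is the rotation-invariant
probability measure on the Euclidean unit sphere and `‖·‖_K` is the gauge of `K`. -/
def Mval {n : ℕ} (K : Set (EuclideanSpace ℝ (Fin n))) : ℝ :=
  Real.sqrt (⨍ x : sphere (0 : EuclideanSpace ℝ (Fin n)) 1,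
    gauge K (x : EuclideanSpace ℝ (Fin n)) ^ 2
      ∂((volume : Measure (EuclideanSpace ℝ (Fin n))).toSphere))


variable {n : ℕ}


lemma sphereMap_mem (R : EuclideanSpace ℝ (Fin n) ≃ₗᵢ[ℝ] EuclideanSpace ℝ (Fin n))
    (x : sphere (0 : EuclideanSpace ℝ (Fin n)) 1) :
    R x ∈ sphere (0 : EuclideanSpace ℝ (Fin n)) 1 := by
  have := x.2
  simp only [mem_sphere_zero_iff_norm] at this ⊢
  simp [this]

/-- The homeomorphism of the unit sphere induced by a linear isometry equiv. -/
def sphereHomeo (R : EuclideanSpace ℝ (Fin n) ≃ₗᵢ[ℝ] EuclideanSpace ℝ (Fin n)) :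
    sphere (0 : EuclideanSpace ℝ (Fin n)) 1 ≃ₜ sphere (0 : EuclideanSpace ℝ (Fin n)) 1 where
  toFun x := ⟨R x, sphereMap_mem R x⟩
  invFun x := ⟨R.symm x, sphereMap_mem R.symm x⟩
  left_inv x := by ext1; simp
  right_inv x := by ext1; simp
  continuous_toFun := Continuous.subtype_mk (R.continuous.comp continuous_subtype_val) _
  continuous_invFun := Continuous.subtype_mk (R.symm.continuous.comp continuous_subtype_val) _

lemma smulSet_eq (s : Set (sphere (0 : EuclideanSpace ℝ (Fin n)) 1)) (r : Ioi (0:ℝ)) :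
    (Subtype.val '' ((homeomorphUnitSphereProd (EuclideanSpace ℝ (Fin n))) ⁻¹' s ×ˢ Iio r))
      = Ioo (0:ℝ) r • (Subtype.val '' s) := by
  rw [← image2_smul, image2_image_right, ← Homeomorph.image_symm, image_image,
    ← image_subtype_val_Ioi_Iio, image2_image_left, image2_swap, ← image_prod]
  rfl

lemma smulSet_measurable {s : Set (sphere (0 : EuclideanSpace ℝ (Fin n)) 1)}
    (hs : MeasurableSet s) :
    MeasurableSet (Ioo (0:ℝ) 1 • (Subtype.val '' s)) := by
  rw [← smulSet_eq s ⟨1, mem_Ioi.2 one_pos⟩]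
  exact (MeasurableEmbedding.subtype_coe
      (measurableSet_singleton (0 : EuclideanSpace ℝ (Fin n))).compl).measurableSet_image.2
    ((homeomorphUnitSphereProd _).measurable (hs.prod measurableSet_Iio))

lemma image_symm_eq_preimage (R : EuclideanSpace ℝ (Fin n) ≃ₗᵢ[ℝ] EuclideanSpace ℝ (Fin n))
    (X : Set (EuclideanSpace ℝ (Fin n))) : R.symm '' X = ⇑R ⁻¹' X := by
  ext y
  constructor
  · rintro ⟨z, hz, rfl⟩; simpa using hz
  · intro hy; exact ⟨R y, hy, by simp⟩

lemma smul_image_linear (c : Set ℝ) (S : Set (EuclideanSpace ℝ (Fin n)))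
    (R : EuclideanSpace ℝ (Fin n) ≃ₗᵢ[ℝ] EuclideanSpace ℝ (Fin n)) :
    c • (R '' S) = R '' (c • S) := by
  ext y
  simp only [Set.mem_smul, Set.mem_image]
  constructor
  · rintro ⟨r, hr, -, ⟨z, hz, rfl⟩, rfl⟩
    exact ⟨r • z, ⟨r, hr, z, hz, rfl⟩, by simp⟩
  · rintro ⟨-, ⟨r, hr, z, hz, rfl⟩, rfl⟩
    exact ⟨r, hr, R z, ⟨z, hz, rfl⟩, by simp⟩

lemma coe_image_preimage (R : EuclideanSpace ℝ (Fin n) ≃ₗᵢ[ℝ] EuclideanSpace ℝ (Fin n))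
    (s : Set (sphere (0 : EuclideanSpace ℝ (Fin n)) 1)) :
    Subtype.val '' ((sphereHomeo R) ⁻¹' s) = R.symm '' (Subtype.val '' s) := by
  ext y
  constructor
  · rintro ⟨x, hx, rfl⟩
    exact ⟨R x, ⟨⟨R x, sphereMap_mem R x⟩, hx, rfl⟩, by simp⟩
  · rintro ⟨-, ⟨w, hw, rfl⟩, rfl⟩
    refine ⟨⟨R.symm w, sphereMap_mem R.symm w⟩, ?_, rfl⟩
    show (⟨R (R.symm w), _⟩ : sphere (0 : EuclideanSpace ℝ (Fin n)) 1) ∈ s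
    convert hw using 2
    · simp
  
lemma toSphere_map (R : EuclideanSpace ℝ (Fin n) ≃ₗᵢ[ℝ] EuclideanSpace ℝ (Fin n)) :
    Measure.map (sphereHomeo R) (volume : Measure (EuclideanSpace ℝ (Fin n))).toSphere
      = (volume : Measure (EuclideanSpace ℝ (Fin n))).toSphere := by
  ext s hs
  rw [Measure.map_apply (sphereHomeo R).measurable hs,
    Measure.toSphere_apply' _ ((sphereHomeo R).measurable hs),
    Measure.toSphere_apply' _ hs, coe_image_preimage,
    smul_image_linear _ _ R.symm, image_symm_eq_preimage,
    (R.measurePreserving).measure_preimage (smulSet_measurable hs).nullMeasurableSet]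

lemma integral_comp_sphereHomeo (R : EuclideanSpace ℝ (Fin n) ≃ₗᵢ[ℝ] EuclideanSpace ℝ (Fin n))
    (g : sphere (0 : EuclideanSpace ℝ (Fin n)) 1 → ℝ) :
    ∫ x, g (sphereHomeo R x) ∂(volume : Measure (EuclideanSpace ℝ (Fin n))).toSphere
      = ∫ x, g x ∂(volume : Measure (EuclideanSpace ℝ (Fin n))).toSphere :=
  MeasurePreserving.integral_comp ⟨(sphereHomeo R).measurable, toSphere_map R⟩
    (sphereHomeo R).measurableEmbedding g

lemma integrable_sphere_cont (g : sphere (0 : EuclideanSpace ℝ (Fin n)) 1 → ℝ)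
    (hg : Continuous g) :
    Integrable g (volume : Measure (EuclideanSpace ℝ (Fin n))).toSphere :=
  hg.integrable_of_hasCompactSupport (HasCompactSupport.of_compactSpace g)

lemma integral_inner_sq (hn : 0 < n) (u : EuclideanSpace ℝ (Fin n)) (hu : ‖u‖ = 1) :
    ∫ x : sphere (0 : EuclideanSpace ℝ (Fin n)) 1,
        (inner ℝ u (x : EuclideanSpace ℝ (Fin n)) : ℝ) ^ 2
        ∂(volume : Measure (EuclideanSpace ℝ (Fin n))).toSphere
      = (((volume : Measure (EuclideanSpace ℝ (Fin n))).toSphere univ).toReal) / n := by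
  -- Step A: the integral is the same for all unit vectors.
  have stepA : ∀ u v : EuclideanSpace ℝ (Fin n), ‖u‖ = 1 → ‖v‖ = 1 →
      (∫ x : sphere (0 : EuclideanSpace ℝ (Fin n)) 1,
        (inner ℝ u (x : EuclideanSpace ℝ (Fin n)) : ℝ) ^ 2
        ∂(volume : Measure (EuclideanSpace ℝ (Fin n))).toSphere)
      = ∫ x : sphere (0 : EuclideanSpace ℝ (Fin n)) 1,
        (inner ℝ v (x : EuclideanSpace ℝ (Fin n)) : ℝ) ^ 2
        ∂(volume : Measure (EuclideanSpace ℝ (Fin n))).toSphere := by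
    intro u v hu hv
    have hcard : Module.finrank ℝ (EuclideanSpace ℝ (Fin n)) = Fintype.card (Fin n) := by
      simp
    have horth : ∀ w : EuclideanSpace ℝ (Fin n), ‖w‖ = 1 →
        Orthonormal ℝ (Set.restrict ({⟨0, hn⟩} : Set (Fin n)) (fun _ => w)) := by
      intro w hw
      constructor
      · intro i; exact hw
      · intro i j hij
        exact absurd (Subtype.ext (by rw [i.2.out, j.2.out])) hij
    obtain ⟨b, hb⟩ := (horth u hu).exists_orthonormalBasis_extension_of_card_eq hcard
    obtain ⟨b', hb'⟩ := (horth v hv).exists_orthonormalBasis_extension_of_card_eq hcard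
    set R : EuclideanSpace ℝ (Fin n) ≃ₗᵢ[ℝ] EuclideanSpace ℝ (Fin n) :=
      b'.repr.trans b.repr.symm with hR
    have hRv : R v = u := by
      have h1 : v = b' ⟨0, hn⟩ := (hb' _ rfl).symm
      have h2 : b ⟨0, hn⟩ = u := hb _ rfl
      rw [hR, h1, ← h2]
      simp [LinearIsometryEquiv.trans_apply, OrthonormalBasis.repr_self,
        OrthonormalBasis.repr_symm_single]
    calc ∫ x : sphere (0 : EuclideanSpace ℝ (Fin n)) 1,
          (inner ℝ u (x : EuclideanSpace ℝ (Fin n)) : ℝ) ^ 2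
          ∂(volume : Measure (EuclideanSpace ℝ (Fin n))).toSphere
        = ∫ x : sphere (0 : EuclideanSpace ℝ (Fin n)) 1,
          (inner ℝ u ((sphereHomeo R x : EuclideanSpace ℝ (Fin n))) : ℝ) ^ 2
          ∂(volume : Measure (EuclideanSpace ℝ (Fin n))).toSphere := by
          rw [integral_comp_sphereHomeo R
            (fun x => (inner ℝ u (x : EuclideanSpace ℝ (Fin n)) : ℝ) ^ 2)]
      _ = _ := by
          congr 1
          funext x
          have : (inner ℝ u (R (x : EuclideanSpace ℝ (Fin n))) : ℝ)
              = (inner ℝ v (x : EuclideanSpace ℝ (Fin n)) : ℝ) := by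
            rw [← hRv]
            exact R.inner_map_map v x
          show (inner ℝ u (R (x : EuclideanSpace ℝ (Fin n))) : ℝ) ^ 2 = _
          rw [this]
  have hint : ∀ w : EuclideanSpace ℝ (Fin n),
      Integrable (fun x : sphere (0 : EuclideanSpace ℝ (Fin n)) 1 =>
        (inner ℝ w (x : EuclideanSpace ℝ (Fin n)) : ℝ) ^ 2)
        (volume : Measure (EuclideanSpace ℝ (Fin n))).toSphere := fun w =>
    integrable_sphere_cont _ ((continuous_const.inner continuous_subtype_val).pow 2)
  have hsum : ∑ i : Fin n, ∫ x : sphere (0 : EuclideanSpace ℝ (Fin n)) 1,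
      (inner ℝ (EuclideanSpace.single i (1:ℝ)) (x : EuclideanSpace ℝ (Fin n)) : ℝ) ^ 2
      ∂(volume : Measure (EuclideanSpace ℝ (Fin n))).toSphere
      = (((volume : Measure (EuclideanSpace ℝ (Fin n))).toSphere univ).toReal) := by
    rw [← integral_finset_sum _ (fun i _ => hint _)]
    have hone : ∀ x : sphere (0 : EuclideanSpace ℝ (Fin n)) 1,
        ∑ i : Fin n, (inner ℝ (EuclideanSpace.single i (1:ℝ))
          (x : EuclideanSpace ℝ (Fin n)) : ℝ) ^ 2 = 1 := by
      intro x
      have hx : ‖(x : EuclideanSpace ℝ (Fin n))‖ = 1 := by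
        simpa [mem_sphere_zero_iff_norm] using x.2
      have h2 : ∑ i : Fin n, ‖(x : EuclideanSpace ℝ (Fin n)) i‖ ^ 2 = 1 := by
        rw [EuclideanSpace.norm_eq] at hx
        exact Real.sqrt_eq_one.mp hx
      have h3 : ∑ i : Fin n, ((x : EuclideanSpace ℝ (Fin n)) i) ^ 2 = 1 := by
        simpa [Real.norm_eq_abs, sq_abs] using h2
      simpa [EuclideanSpace.inner_single_left] using h3
    rw [integral_congr_ae (Filter.Eventually.of_forall hone), integral_const]
    simp [measureReal_def]
  have hconst : ∀ i : Fin n, ∫ x : sphere (0 : EuclideanSpace ℝ (Fin n)) 1,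
      (inner ℝ (EuclideanSpace.single i (1:ℝ)) (x : EuclideanSpace ℝ (Fin n)) : ℝ) ^ 2
      ∂(volume : Measure (EuclideanSpace ℝ (Fin n))).toSphere
      = ∫ x : sphere (0 : EuclideanSpace ℝ (Fin n)) 1,
      (inner ℝ u (x : EuclideanSpace ℝ (Fin n)) : ℝ) ^ 2
      ∂(volume : Measure (EuclideanSpace ℝ (Fin n))).toSphere := by
    intro i
    exact stepA _ _ (by simp) hu
  rw [Finset.sum_congr rfl (fun i _ => hconst i), Finset.sum_const] at hsum
  simp only [Finset.card_univ, Fintype.card_fin, nsmul_eq_mul] at hsum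
  rw [eq_div_iff (by exact_mod_cast hn.ne' : (n:ℝ) ≠ 0)]
  linarith [hsum]

lemma normsq_eq (w : EuclideanSpace ℝ (Fin n)) : ‖w‖ ^ 2 = ∑ i : Fin n, (w i) ^ 2 := by
  rw [EuclideanSpace.norm_eq, Real.sq_sqrt (by positivity)]
  simp [Real.norm_eq_abs, sq_abs]

lemma euclid_decomp (y : EuclideanSpace ℝ (Fin n)) :
    y = ∑ j : Fin n, y j • EuclideanSpace.single j (1:ℝ) := by
  ext k
  rw [WithLp.ofLp_sum, Finset.sum_apply]
  simp [EuclideanSpace.single_apply]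

lemma integral_inner_sq' (hn : 0 < n) (v : EuclideanSpace ℝ (Fin n)) :
    ∫ x : sphere (0 : EuclideanSpace ℝ (Fin n)) 1,
        (inner ℝ v (x : EuclideanSpace ℝ (Fin n)) : ℝ) ^ 2
        ∂(volume : Measure (EuclideanSpace ℝ (Fin n))).toSphere
      = ‖v‖ ^ 2 * (((volume : Measure (EuclideanSpace ℝ (Fin n))).toSphere univ).toReal) / n := by
  rcases eq_or_ne v 0 with rfl | hv
  · simp
  · have hv' : ‖v‖ ≠ 0 := norm_ne_zero_iff.2 hv
    have hu : ‖(‖v‖⁻¹ • v)‖ = 1 := by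
      simp [norm_smul, inv_mul_cancel₀ hv']
    have key := integral_inner_sq hn _ hu
    have : ∀ x : sphere (0 : EuclideanSpace ℝ (Fin n)) 1,
        (inner ℝ v (x : EuclideanSpace ℝ (Fin n)) : ℝ) ^ 2
          = ‖v‖ ^ 2 * (inner ℝ (‖v‖⁻¹ • v) (x : EuclideanSpace ℝ (Fin n)) : ℝ) ^ 2 := by
      intro x
      rw [real_inner_smul_left]
      field_simp
    rw [integral_congr_ae (Filter.Eventually.of_forall this), integral_const_mul, key]
    ring

lemma integral_map_sq (hn : 0 < n) (A : EuclideanSpace ℝ (Fin n) →ₗ[ℝ] EuclideanSpace ℝ (Fin n)) :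
    ∫ x : sphere (0 : EuclideanSpace ℝ (Fin n)) 1,
        ‖A (x : EuclideanSpace ℝ (Fin n))‖ ^ 2
        ∂(volume : Measure (EuclideanSpace ℝ (Fin n))).toSphere
      = (∑ j : Fin n, ‖A (EuclideanSpace.single j (1:ℝ))‖ ^ 2)
          * (((volume : Measure (EuclideanSpace ℝ (Fin n))).toSphere univ).toReal) / n := by
  set c : Fin n → EuclideanSpace ℝ (Fin n) :=
    fun i => WithLp.toLp 2 (fun j => A (EuclideanSpace.single j (1:ℝ)) i : Fin n → ℝ) with hc
  have hAx : ∀ x : EuclideanSpace ℝ (Fin n), ∀ i : Fin n,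
      A x i = inner ℝ (c i) x := by
    intro x i
    conv_lhs => rw [euclid_decomp x, map_sum]
    rw [WithLp.ofLp_sum, Finset.sum_apply, PiLp.inner_apply]
    refine Finset.sum_congr rfl fun j _ => ?_
    rw [_root_.map_smul]
    simp [hc, PiLp.smul_apply, smul_eq_mul, mul_comm]
  have hpt : ∀ x : sphere (0 : EuclideanSpace ℝ (Fin n)) 1,
      ‖A (x : EuclideanSpace ℝ (Fin n))‖ ^ 2
        = ∑ i : Fin n, (inner ℝ (c i) (x : EuclideanSpace ℝ (Fin n)) : ℝ) ^ 2 := by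
    intro x
    rw [normsq_eq]
    exact Finset.sum_congr rfl fun i _ => by rw [hAx]
  rw [integral_congr_ae (Filter.Eventually.of_forall hpt),
    integral_finset_sum (f := fun i (x : sphere (0 : EuclideanSpace ℝ (Fin n)) 1) =>
      (inner ℝ (c i) (x : EuclideanSpace ℝ (Fin n)) : ℝ) ^ 2) _ (fun i _ => integrable_sphere_cont _
      ((continuous_const.inner continuous_subtype_val).pow 2))]
  have : ∀ i : Fin n, (∫ x : sphere (0 : EuclideanSpace ℝ (Fin n)) 1,
      (inner ℝ (c i) (x : EuclideanSpace ℝ (Fin n)) : ℝ) ^ 2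
      ∂(volume : Measure (EuclideanSpace ℝ (Fin n))).toSphere)
      = ‖c i‖ ^ 2 * (((volume : Measure (EuclideanSpace ℝ (Fin n))).toSphere univ).toReal) / n :=
    fun i => integral_inner_sq' hn (c i)
  rw [Finset.sum_congr rfl fun i _ => this i, ← Finset.sum_div, ← Finset.sum_mul]
  congr 2
  rw [Finset.sum_congr rfl fun i (_ : i ∈ Finset.univ) => normsq_eq (c i),
    Finset.sum_congr rfl fun j (_ : j ∈ Finset.univ) => normsq_eq (A (EuclideanSpace.single j 1)),
    Finset.sum_comm]

lemma mem_image_equiv_ball (T : EuclideanSpace ℝ (Fin n) ≃ₗ[ℝ] EuclideanSpace ℝ (Fin n))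
    (z : EuclideanSpace ℝ (Fin n)) :
    z ∈ T '' closedBall 0 1 ↔ ‖T.symm z‖ ≤ 1 := by
  constructor
  · rintro ⟨d, hd, rfl⟩
    simpa [mem_closedBall_zero_iff] using hd
  · intro h
    exact ⟨T.symm z, mem_closedBall_zero_iff.2 h, by simp⟩

lemma gauge_ellipsoid (T : EuclideanSpace ℝ (Fin n) ≃ₗ[ℝ] EuclideanSpace ℝ (Fin n))
    (x : EuclideanSpace ℝ (Fin n)) :
    gauge (T '' closedBall 0 1) x = ‖T.symm x‖ := by
  have hmem : ∀ r : ℝ, 0 < r →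
      (x ∈ r • (T '' closedBall (0 : EuclideanSpace ℝ (Fin n)) 1) ↔ ‖T.symm x‖ ≤ r) := by
    intro r hr
    rw [mem_smul_set_iff_inv_smul_mem₀ hr.ne', mem_image_equiv_ball, _root_.map_smul, norm_smul]
    rw [norm_inv, Real.norm_eq_abs, abs_of_pos hr, inv_mul_le_iff₀ hr, mul_one]
  have hset : {r : ℝ | 0 < r ∧ x ∈ r • (T '' closedBall (0 : EuclideanSpace ℝ (Fin n)) 1)}
      = {r : ℝ | 0 < r ∧ ‖T.symm x‖ ≤ r} := by
    ext r
    simp only [mem_setOf_eq]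
    constructor
    · rintro ⟨hr, hx⟩; exact ⟨hr, (hmem r hr).1 hx⟩
    · rintro ⟨hr, hx⟩; exact ⟨hr, (hmem r hr).2 hx⟩
  rw [gauge, hset]
  rcases eq_or_lt_of_le (norm_nonneg (T.symm x)) with h0 | hpos
  · rw [← h0]
    have : {r : ℝ | 0 < r ∧ (0:ℝ) ≤ r} = Ioi 0 := by
      ext r; simp only [mem_setOf_eq, mem_Ioi]
      exact ⟨fun h => h.1, fun h => ⟨h, h.le⟩⟩
    rw [this, csInf_Ioi]
  · have : {r : ℝ | 0 < r ∧ ‖T.symm x‖ ≤ r} = Ici ‖T.symm x‖ := by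
      ext r; simp only [mem_setOf_eq, mem_Ici]
      exact ⟨fun h => h.2, fun h => ⟨lt_of_lt_of_le hpos h, h⟩⟩
    rw [this, csInf_Ici]

lemma mass_pos (hn : 0 < n) :
    0 < (((volume : Measure (EuclideanSpace ℝ (Fin n))).toSphere univ).toReal) := by
  have h1 : ((volume : Measure (EuclideanSpace ℝ (Fin n))).toSphere univ)
      = Module.finrank ℝ (EuclideanSpace ℝ (Fin n)) * volume (ball (0:EuclideanSpace ℝ (Fin n)) 1) :=
    Measure.toSphere_apply_univ _
  have hfr : (Module.finrank ℝ (EuclideanSpace ℝ (Fin n)) : ℝ≥0∞) ≠ 0 := by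
    simp [finrank_euclideanSpace_fin, hn.ne']
  refine ENNReal.toReal_pos ?_ (measure_ne_top _ _)
  rw [h1]
  exact mul_ne_zero hfr (measure_ball_pos volume _ one_pos).ne'

lemma Mval_sq (hn : 0 < n) (T : EuclideanSpace ℝ (Fin n) ≃ₗ[ℝ] EuclideanSpace ℝ (Fin n)) :
    Mval (T '' closedBall 0 1) ^ 2
      = (∑ j : Fin n, ‖T.symm (EuclideanSpace.single j (1:ℝ))‖ ^ 2) / n := by
  have hgauge : ∀ x : sphere (0 : EuclideanSpace ℝ (Fin n)) 1,
      gauge (T '' closedBall 0 1) (x : EuclideanSpace ℝ (Fin n)) ^ 2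
        = ‖(T.symm : EuclideanSpace ℝ (Fin n) →ₗ[ℝ] EuclideanSpace ℝ (Fin n))
            (x : EuclideanSpace ℝ (Fin n))‖ ^ 2 := by
    intro x; rw [gauge_ellipsoid]; rfl
  have havg : (⨍ x : sphere (0 : EuclideanSpace ℝ (Fin n)) 1,
      gauge (T '' closedBall 0 1) (x : EuclideanSpace ℝ (Fin n)) ^ 2
        ∂((volume : Measure (EuclideanSpace ℝ (Fin n))).toSphere))
      = (∑ j : Fin n, ‖T.symm (EuclideanSpace.single j (1:ℝ))‖ ^ 2) / n := by
    rw [average_eq, integral_congr_ae (Filter.Eventually.of_forall hgauge),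
      integral_map_sq hn, smul_eq_mul]
    have hm := (mass_pos (n := n) hn).ne'
    set mass := ((volume : Measure (EuclideanSpace ℝ (Fin n))).toSphere univ).toReal with hmass
    rw [measureReal_def, ← hmass]
    field_simp
    rfl
  rw [Mval, Real.sq_sqrt (by rw [havg]; positivity), havg]


/-- Theorem 2.4: there exist absolute constants `c, c' > 0` such that for every
ellipsoid `E` in `ℝ^n` and every `m ≤ c√n` there is a coordinate subset `σ` of
cardinality `m` with `E ∩ ℝ^σ ⊇ [c'/(√m M_E)] D_σ`. -/
theorem coordinate_section_ellipsoid_contains_ball :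
    ∃ c : ℝ, ∃ c' : ℝ, 0 < c ∧ 0 < c' ∧
      ∀ (n : ℕ) (E : Set (EuclideanSpace ℝ (Fin n))), IsEllipsoid E →
        ∀ m : ℕ, (m : ℝ) ≤ c * Real.sqrt n →
          ∃ σ : Finset (Fin n), σ.card = m ∧
            (c' / (Real.sqrt m * Mval E)) • coordBall σ ⊆
              E ∩ coordSubspace σ := by
  refine ⟨1/2, 1/2, by norm_num, by norm_num, ?_⟩
  intro n E hE m hm
  obtain ⟨T, rfl⟩ := hE
  have hball0 : (0 : EuclideanSpace ℝ (Fin n)) ∈ T '' closedBall 0 1 :=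
    (mem_image_equiv_ball T 0).2 (by simp)
  rcases Nat.eq_zero_or_pos m with rfl | hm1
  · refine ⟨∅, rfl, ?_⟩
    have hzero : ((1:ℝ)/2) / (Real.sqrt ((0:ℕ):ℝ) * Mval (T '' closedBall 0 1)) = 0 := by
      norm_num
    have hne : (coordBall (∅ : Finset (Fin n))).Nonempty :=
      ⟨0, mem_closedBall_self zero_le_one, fun j _ => rfl⟩
    rw [hzero, Set.zero_smul_set hne]
    rintro x hx
    rw [Set.mem_zero] at hx
    subst hx
    exact ⟨hball0, fun j _ => rfl⟩
  · have hn : 0 < n := by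
      rcases Nat.eq_zero_or_pos n with rfl | h
      · exfalso
        have : (m:ℝ) ≤ 0 := by simpa using hm
        have : (0:ℝ) < m := by exact_mod_cast hm1
        linarith
      · exact h
    set f : Fin n → ℝ := fun j => ‖T.symm (EuclideanSpace.single j (1:ℝ))‖ ^ 2 with hf
    set Tot : ℝ := ∑ j : Fin n, f j with hTot
    set M : ℝ := Mval (T '' closedBall 0 1) with hM
    have hMsq : M ^ 2 = Tot / n := Mval_sq hn T
    have hTotpos : 0 < Tot := by
      refine Finset.sum_pos' (fun j _ => by positivity) ⟨⟨0, hn⟩, Finset.mem_univ _, ?_⟩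
      have hs : (EuclideanSpace.single (⟨0, hn⟩ : Fin n) (1:ℝ)) ≠ 0 := by
        intro h
        have := congrArg (fun z : EuclideanSpace ℝ (Fin n) => z ⟨0, hn⟩) h
        simpa [EuclideanSpace.single_apply] using this
      have hTs : T.symm (EuclideanSpace.single (⟨0, hn⟩ : Fin n) (1:ℝ)) ≠ 0 := by
        intro h
        exact hs (by simpa using congrArg T h)
      exact pow_pos (norm_pos_iff.mpr hTs) 2
    have hMnonneg : 0 ≤ M := Real.sqrt_nonneg _
    have hMpos : 0 < M := by
      rcases eq_or_lt_of_le hMnonneg with h0 | h; swap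
      · exact h
      · exfalso
        rw [← h0] at hMsq
        have : Tot = 0 := by
          field_simp at hMsq
          simpa using hMsq.symm
        linarith
    have hn' : (0:ℝ) < n := by exact_mod_cast hn
    -- Markov bound
    set t : ℝ := 2 * Tot / n with ht
    have htpos : 0 < t := by positivity
    set B : Finset (Fin n) := Finset.univ.filter (fun j => t ≤ f j) with hB
    have hBsum : (B.card : ℝ) * t ≤ Tot := by
      have h1 : B.card • t ≤ ∑ j ∈ B, f j :=
        Finset.card_nsmul_le_sum B f t (fun j hj => (Finset.mem_filter.1 hj).2)
      have h2 : ∑ j ∈ B, f j ≤ Tot :=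
        Finset.sum_le_sum_of_subset_of_nonneg (Finset.subset_univ B)
          (fun j _ _ => by positivity)
      calc (B.card : ℝ) * t = B.card • t := by rw [nsmul_eq_mul]
        _ ≤ ∑ j ∈ B, f j := h1
        _ ≤ Tot := h2
    have hBcard : (B.card : ℝ) ≤ n / 2 := by
      rw [ht] at hBsum
      rw [mul_div_assoc] at hBsum
      have h3 : (B.card : ℝ) * (2 * Tot) ≤ Tot * n := by
        calc (B.card : ℝ) * (2 * Tot) = ((B.card : ℝ) * (2 * Tot / n)) * n := by
              field_simp
          _ ≤ Tot * n := by
              apply mul_le_mul_of_nonneg_right _ hn'.le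
              rw [mul_div_assoc]
              exact hBsum
      nlinarith
    have hsqrtn : Real.sqrt n ≤ n := by
      have h1 : (n:ℝ) ≤ (n:ℝ)^2 := by nlinarith [(by exact_mod_cast hn : (1:ℝ) ≤ (n:ℝ))]
      calc Real.sqrt n ≤ Real.sqrt ((n:ℝ)^2) := Real.sqrt_le_sqrt h1
        _ = n := Real.sqrt_sq hn'.le
    have hmlen : (m : ℝ) ≤ (Bᶜ.card : ℝ) := by
      have hc : (Bᶜ.card : ℝ) = n - B.card := by
        rw [Finset.card_compl]
        rw [Nat.cast_sub (by simpa using Finset.card_le_univ B)]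
        simp
      rw [hc]
      have : (m:ℝ) ≤ 1/2 * Real.sqrt n := hm
      nlinarith
    obtain ⟨σ, hσsub, hσcard⟩ := Finset.exists_subset_card_eq (s := Bᶜ) (n := m) (by exact_mod_cast hmlen)
    refine ⟨σ, hσcard, ?_⟩
    have hσsum : ∑ j ∈ σ, f j ≤ m * t := by
      have h1 : ∀ j ∈ σ, f j ≤ t := by
        intro j hj
        have hj' := hσsub hj
        rw [Finset.mem_compl, hB, Finset.mem_filter] at hj'
        push_neg at hj'
        exact (hj' (Finset.mem_univ j)).le
      calc ∑ j ∈ σ, f j ≤ σ.card • t := Finset.sum_le_card_nsmul σ f t h1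
        _ = m * t := by rw [hσcard, nsmul_eq_mul]
    -- the inclusion
    set r : ℝ := (1/2 : ℝ) / (Real.sqrt m * M) with hr
    have hmpos' : (0:ℝ) < m := by exact_mod_cast hm1
    have hrpos : 0 < r := by
      apply div_pos (by norm_num)
      exact mul_pos (Real.sqrt_pos.2 hmpos') hMpos
    rintro x hx
    obtain ⟨y, hy, rfl⟩ := Set.mem_smul_set.1 hx
    obtain ⟨hy1, hy2⟩ := hy
    have hynorm : ‖y‖ ≤ 1 := mem_closedBall_zero_iff.1 hy1
    constructor
    · -- membership in the ellipsoid
      rw [mem_image_equiv_ball]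
      have hyd : y = ∑ j ∈ σ, y j • EuclideanSpace.single j (1:ℝ) := by
        ext k
        rw [WithLp.ofLp_sum, Finset.sum_apply]
        by_cases hk : k ∈ σ
        · simp [EuclideanSpace.single_apply, Finset.sum_ite_eq, hk]
        · simp [EuclideanSpace.single_apply, Finset.sum_ite_eq, hk, hy2 k hk]
      have hAy : ‖T.symm y‖ ≤ ∑ j ∈ σ, |y j| * ‖T.symm (EuclideanSpace.single j (1:ℝ))‖ := by
        calc ‖T.symm y‖ = ‖∑ j ∈ σ, y j • T.symm (EuclideanSpace.single j (1:ℝ))‖ := by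
              conv_lhs => rw [hyd]
              rw [map_sum]
              congr 1
              exact Finset.sum_congr rfl fun j _ => by rw [_root_.map_smul]
          _ ≤ ∑ j ∈ σ, ‖y j • T.symm (EuclideanSpace.single j (1:ℝ))‖ := norm_sum_le _ _
          _ = ∑ j ∈ σ, |y j| * ‖T.symm (EuclideanSpace.single j (1:ℝ))‖ := by
              exact Finset.sum_congr rfl fun j _ => by rw [norm_smul, Real.norm_eq_abs]
      have hCS : (∑ j ∈ σ, |y j| * ‖T.symm (EuclideanSpace.single j (1:ℝ))‖) ^ 2
          ≤ (∑ j ∈ σ, |y j| ^ 2) * (∑ j ∈ σ, f j) :=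
        Finset.sum_mul_sq_le_sq_mul_sq σ _ _
      have hy2sum : ∑ j ∈ σ, |y j| ^ 2 ≤ 1 := by
        have h1 : ∑ j ∈ σ, |y j| ^ 2 ≤ ∑ j : Fin n, |y j| ^ 2 :=
          Finset.sum_le_sum_of_subset_of_nonneg (Finset.subset_univ σ)
            (fun j _ _ => by positivity)
        have h2 : ∑ j : Fin n, |y j| ^ 2 = ‖y‖ ^ 2 := by
          rw [normsq_eq]; simp [sq_abs]
        rw [h2] at h1
        nlinarith [norm_nonneg y]
      have hAysq : ‖T.symm y‖ ^ 2 ≤ 2 * m * M ^ 2 := by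
        have hS : 0 ≤ ∑ j ∈ σ, |y j| * ‖T.symm (EuclideanSpace.single j (1:ℝ))‖ :=
          Finset.sum_nonneg fun j _ => by positivity
        have h1 : ‖T.symm y‖ ^ 2
            ≤ (∑ j ∈ σ, |y j| * ‖T.symm (EuclideanSpace.single j (1:ℝ))‖) ^ 2 := by
          apply pow_le_pow_left₀ (norm_nonneg _) hAy
        have h2 : (∑ j ∈ σ, f j) ≤ 2 * m * M ^ 2 := by
          rw [hMsq]
          calc ∑ j ∈ σ, f j ≤ m * t := hσsum
            _ = 2 * m * (Tot / n) := by rw [ht]; ring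
        have hQ : (0:ℝ) ≤ ∑ j ∈ σ, f j := Finset.sum_nonneg fun j _ => by positivity
        have h3 : (∑ j ∈ σ, |y j| ^ 2) * (∑ j ∈ σ, f j) ≤ 1 * (∑ j ∈ σ, f j) :=
          mul_le_mul_of_nonneg_right hy2sum hQ
        linarith
      have hfin : ‖T.symm (r • y)‖ ^ 2 ≤ 1/2 := by
        rw [_root_.map_smul, norm_smul, Real.norm_eq_abs, abs_of_pos hrpos, mul_pow]
        have hr2 : r ^ 2 = (1/4) / (m * M ^ 2) := by
          rw [hr, div_pow, mul_pow, Real.sq_sqrt (le_of_lt hmpos')]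
          norm_num
        rw [hr2]
        rw [div_mul_eq_mul_div, div_le_iff₀ (by positivity)]
        linarith
      nlinarith [norm_nonneg (T.symm (r • y)), hfin]
    · intro j hj
      show (r • y) j = 0
      rw [PiLp.smul_apply, hy2 j hj, smul_zero]
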